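/- arXiv:1711.00419 — 2 statements merged into one kernel-verified Lean document; each statement's English description precedes it below -/
import Mathlib

section
/- Let q : (0,∞) → ℝ be continuous and define L_m h := h'' + (1/R)h' − (m²/R²)h − q(R)h for integers m ≥ 0. Assume the mode-one quadratic form is nonpositive: ∫₀^∞ (L_1 g)(R)·g(R)·R dR ≤ 0 for every twice continuously differentiable g with compact support contained in (0,∞). Then for every integer m ≥ 2 and every twice continuously differentiable f with compact support contained in (0,∞) that is not identically zero, ∫₀^∞ (L_m f)(R)·f(R)·R dR < 0. -/
open MeasureTheory Set


/-- The azimuthal mode-`m` operator `L_m h = h'' + h'/R − (m²/R²) h − q h`. -/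
noncomputable def azimuthalOp (q : ℝ → ℝ) (m : ℕ) (f : ℝ → ℝ) (R : ℝ) : ℝ :=
  deriv (deriv f) R + (1 / R) * deriv f R - ((m : ℝ) ^ 2 / R ^ 2) * f R - q R * f R

lemma glue_cont (G : ℝ → ℝ) (K : Set ℝ) (hK : IsClosed K) (hKsub : K ⊆ Set.Ioi 0)
    (hc : ContinuousOn G (Set.Ioi 0)) (hz : ∀ x ∉ K, G x = 0) : Continuous G := by
  rw [continuous_iff_continuousAt]
  intro x
  by_cases hx : x ∈ Set.Ioi 0
  · exact hc.continuousAt (isOpen_Ioi.mem_nhds hx)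
  · have hxK : x ∉ K := fun h => hx (hKsub h)
    have h0 : ∀ᶠ y in nhds x, G y = 0 :=
      Filter.eventually_of_mem (hK.isOpen_compl.mem_nhds hxK) (fun y hy => hz y hy)
    exact ContinuousAt.congr continuousAt_const (h0.mono fun y hy => hy.symm)


/-- If the mode-one quadratic form is nonpositive on C² functions of compact support
in `(0,∞)`, then for every `m ≥ 2` the mode-`m` quadratic form is strictly negative
on every such nonzero function. -/
theorem azimuthal_mode_m_negative
    (q : ℝ → ℝ) (hq : ContinuousOn q (Set.Ioi 0))
    (h1 : ∀ g : ℝ → ℝ, ContDiff ℝ 2 g → HasCompactSupport g →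
      tsupport g ⊆ Set.Ioi 0 →
      (∫ R in Set.Ioi (0 : ℝ), azimuthalOp q 1 g R * g R * R) ≤ 0) :
    ∀ m : ℕ, 2 ≤ m → ∀ f : ℝ → ℝ, ContDiff ℝ 2 f → HasCompactSupport f →
      tsupport f ⊆ Set.Ioi 0 → f ≠ 0 →
      (∫ R in Set.Ioi (0 : ℝ), azimuthalOp q m f R * f R * R) < 0 := by
  intro m hm f hf hcs hsupp hne
  -- continuity of derivatives
  have hf' : ContDiff ℝ 1 (deriv f) := by
    have := (contDiff_succ_iff_deriv (n := 1)).mp (by exact_mod_cast hf)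
    exact this.2.2
  have hcf' : Continuous (deriv f) := hf'.continuous
  have hcf'' : Continuous (deriv (deriv f)) := by
    have := (contDiff_succ_iff_deriv (n := 0)).mp (by exact_mod_cast hf')
    exact this.2.2.continuous
  have hfz : ∀ x ∉ tsupport f, f x = 0 := fun x hx => image_eq_zero_of_notMem_tsupport hx
  -- the two integrands
  set G : ℕ → ℝ → ℝ := fun k R => azimuthalOp q k f R * f R * R with hG
  set H : ℝ → ℝ := fun R => f R ^ 2 / R with hH
  have hKc : IsClosed (tsupport f) := isClosed_tsupport f
  have hGcont : ∀ k, Continuous (G k) := by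
    intro k
    refine glue_cont _ (tsupport f) hKc hsupp ?_ ?_
    · apply ContinuousOn.mul (ContinuousOn.mul ?_ (Continuous.continuousOn hf.continuous))
        continuousOn_id
      unfold azimuthalOp
      apply ContinuousOn.sub
      apply ContinuousOn.sub
      apply ContinuousOn.add hcf''.continuousOn
      · exact ContinuousOn.mul (ContinuousOn.div continuousOn_const continuousOn_id
          (fun x hx => ne_of_gt hx)) hcf'.continuousOn
      · exact ContinuousOn.mul (ContinuousOn.div continuousOn_const
          (continuousOn_pow 2) (fun x hx => pow_ne_zero 2 (ne_of_gt hx))) hf.continuous.continuousOn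
      · exact hq.mul hf.continuous.continuousOn
    · intro x hx; simp [hG, hfz x hx]
  have hHcont : Continuous H := by
    refine glue_cont _ (tsupport f) hKc hsupp ?_ ?_
    · exact ContinuousOn.div ((hf.continuous.pow 2).continuousOn) continuousOn_id
        (fun x hx => ne_of_gt hx)
    · intro x hx; simp [hH, hfz x hx]
  have hGsupp : ∀ k, HasCompactSupport (G k) := by
    intro k
    apply HasCompactSupport.intro hcs
    intro x hx; simp [hG, hfz x hx]
  have hHsupp : HasCompactSupport H := by
    apply HasCompactSupport.intro hcs
    intro x hx; simp [hH, hfz x hx]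
  have hGint : ∀ k, IntegrableOn (G k) (Set.Ioi 0) :=
    fun k => ((hGcont k).integrable_of_hasCompactSupport (hGsupp k)).integrableOn
  have hHint : IntegrableOn H (Set.Ioi 0) :=
    (hHcont.integrable_of_hasCompactSupport hHsupp).integrableOn
  -- pointwise identity on Ioi 0
  have hpt : ∀ R ∈ Set.Ioi (0:ℝ), G m R = G 1 R - ((m:ℝ)^2 - 1) * H R := by
    intro R hR
    have hR0 : R ≠ 0 := ne_of_gt hR
    simp only [hG, hH, azimuthalOp]
    field_simp
    ring
  have hsplit : (∫ R in Set.Ioi (0:ℝ), G m R)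
      = (∫ R in Set.Ioi (0:ℝ), G 1 R) - ((m:ℝ)^2 - 1) * ∫ R in Set.Ioi (0:ℝ), H R := by
    rw [MeasureTheory.setIntegral_congr_fun (measurableSet_Ioi) hpt]
    rw [MeasureTheory.integral_sub (hGint 1) (hHint.const_mul _)]
    rw [MeasureTheory.integral_const_mul]
  -- positivity of ∫ H
  have hHnonneg : ∀ R, 0 ≤ H R := by
    intro R
    by_cases hR : R ∈ tsupport f
    · have : (0:ℝ) < R := hsupp hR
      positivity
    · simp [hH, hfz R hR]
  have hHpos : 0 < ∫ R in Set.Ioi (0:ℝ), H R := by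
    obtain ⟨x, hx⟩ : ∃ x, f x ≠ 0 := by
      by_contra h
      push_neg at h
      exact hne (funext h)
    have hx0 : (0:ℝ) < x := hsupp (subset_tsupport f hx)
    rw [MeasureTheory.setIntegral_pos_iff_support_of_nonneg_ae
      (Filter.Eventually.of_forall hHnonneg) hHint]
    have hopen : IsOpen (Function.support H ∩ Set.Ioi 0) :=
      (hHcont.isOpen_support).inter isOpen_Ioi
    have hmem : x ∈ Function.support H ∩ Set.Ioi 0 := by
      constructor
      · simp only [Function.mem_support, hH]
        positivity
      · exact hx0
    exact hopen.measure_pos volume ⟨x, hmem⟩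
  have hle : (∫ R in Set.Ioi (0:ℝ), G 1 R) ≤ 0 := h1 f hf hcs hsupp
  have hmpos : (0:ℝ) < (m:ℝ)^2 - 1 := by
    have : (2:ℝ) ≤ (m:ℝ) := by exact_mod_cast hm
    nlinarith
  calc (∫ R in Set.Ioi (0:ℝ), G m R)
      = (∫ R in Set.Ioi (0:ℝ), G 1 R) - ((m:ℝ)^2 - 1) * ∫ R in Set.Ioi (0:ℝ), H R := hsplit
    _ < 0 := by nlinarith
end

section
/- Let ν_b, ν_f > 0, μ_b*, μ_f* ∈ ℝ, α, |Ω| > 0, ε > 0, and positive integers N_b, N_f. Suppose μ : [0,T) → ℝ and Rᵢ, rⱼ : [0,T) → (0,∞) (i = 1,…,N_b, j = 1,…,N_f) are differentiable and satisfy Ṙᵢ = 2ν_b(μ − μ_b*)/Rᵢ, ṙⱼ = ν_f(μ − μ_f*)/rⱼ, and μ̇ = −(α²/|Ω|)·(16π ν_b(μ − μ_b*)·N_b + 2επ ν_f(μ − μ_f*)·Σⱼ 1/rⱼ). Then the quantity E(τ) := μ(τ) + (α²/|Ω|)·(4π·Σᵢ Rᵢ(τ)² + 2πε·Σⱼ rⱼ(τ))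 is constant on [0,T). -/
open scoped ENNReal BigOperators

/-- For the reduced dynamics of `N_b` spherical bilayers and `N_f` circular
filament hoops coupled to the far-field chemical potential, the total mass
`E(τ) = μ(τ) + (α²/|Ω|)(4π Σᵢ Rᵢ² + 2πε Σⱼ rⱼ)` is conserved. -/
theorem hybrid_morphology_mass_conservation
    (νb νf μbs μfs α vol ε : ℝ)
    (hνb : 0 < νb) (hνf : 0 < νf) (hα : 0 < α) (hvol : 0 < vol) (hε : 0 < ε)
    (Nb Nf : ℕ) (hNb : 0 < Nb) (hNf : 0 < Nf)
    (T : ℝ≥0∞)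
    (μ : ℝ → ℝ) (Rf : Fin Nb → ℝ → ℝ) (rf : Fin Nf → ℝ → ℝ)
    (hRpos : ∀ (i : Fin Nb) (τ : ℝ), 0 ≤ τ → ENNReal.ofReal τ < T → 0 < Rf i τ)
    (hrpos : ∀ (j : Fin Nf) (τ : ℝ), 0 ≤ τ → ENNReal.ofReal τ < T → 0 < rf j τ)
    (hRdot : ∀ (i : Fin Nb) (τ : ℝ), 0 ≤ τ → ENNReal.ofReal τ < T →
      HasDerivAt (Rf i) (2 * νb * (μ τ - μbs) / Rf i τ) τ)
    (hrdot : ∀ (j : Fin Nf) (τ : ℝ), 0 ≤ τ → ENNReal.ofReal τ < T →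
      HasDerivAt (rf j) (νf * (μ τ - μfs) / rf j τ) τ)
    (hμdot : ∀ τ : ℝ, 0 ≤ τ → ENNReal.ofReal τ < T →
      HasDerivAt μ (-(α ^ 2 / vol) *
        (16 * Real.pi * νb * (μ τ - μbs) * (Nb : ℝ)
          + 2 * ε * Real.pi * νf * (μ τ - μfs) * ∑ j, 1 / rf j τ)) τ) :
    ∀ τ₁ τ₂ : ℝ, 0 ≤ τ₁ → ENNReal.ofReal τ₁ < T →
      0 ≤ τ₂ → ENNReal.ofReal τ₂ < T →
      μ τ₁ + (α ^ 2 / vol) *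
          (4 * Real.pi * ∑ i, Rf i τ₁ ^ 2 + 2 * Real.pi * ε * ∑ j, rf j τ₁)
        = μ τ₂ + (α ^ 2 / vol) *
          (4 * Real.pi * ∑ i, Rf i τ₂ ^ 2 + 2 * Real.pi * ε * ∑ j, rf j τ₂) := by
  set c : ℝ := α ^ 2 / vol with hc
  set E : ℝ → ℝ := fun τ => μ τ + c *
      (4 * Real.pi * ∑ i, Rf i τ ^ 2 + 2 * Real.pi * ε * ∑ j, rf j τ) with hE
  -- E has derivative 0 at every admissible time
  have key : ∀ x : ℝ, 0 ≤ x → ENNReal.ofReal x < T → HasDerivAt E 0 x := by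
    intro x hx hxT
    have hμ' := hμdot x hx hxT
    have hR : HasDerivAt (fun τ => ∑ i, Rf i τ ^ 2)
        (∑ i : Fin Nb, 2 * Rf i x * (2 * νb * (μ x - μbs) / Rf i x)) x := by
      refine HasDerivAt.fun_sum fun i _ => ?_
      simpa [pow_one, mul_comm, mul_assoc] using (hRdot i x hx hxT).fun_pow 2
    have hr : HasDerivAt (fun τ => ∑ j, rf j τ)
        (∑ j : Fin Nf, νf * (μ x - μfs) / rf j x) x :=
      HasDerivAt.fun_sum fun j _ => hrdot j x hx hxT
    have hD : HasDerivAt E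
        (-(α ^ 2 / vol) *
          (16 * Real.pi * νb * (μ x - μbs) * (Nb : ℝ)
            + 2 * ε * Real.pi * νf * (μ x - μfs) * ∑ j, 1 / rf j x)
          + c * (4 * Real.pi * ∑ i : Fin Nb, 2 * Rf i x * (2 * νb * (μ x - μbs) / Rf i x)
            + 2 * Real.pi * ε * ∑ j : Fin Nf, νf * (μ x - μfs) / rf j x)) x :=
      hμ'.add (((hR.const_mul (4 * Real.pi)).add (hr.const_mul (2 * Real.pi * ε))).const_mul c)
    have hSR : ∑ i : Fin Nb, 2 * Rf i x * (2 * νb * (μ x - μbs) / Rf i x)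
        = (Nb : ℝ) * (4 * νb * (μ x - μbs)) := by
      rw [Finset.sum_congr rfl fun i _ => ?_, Finset.sum_const, Finset.card_univ,
        Fintype.card_fin, nsmul_eq_mul]
      have hRne : Rf i x ≠ 0 := (hRpos i x hx hxT).ne'
      field_simp
      ring
    have hSr : ∑ j : Fin Nf, νf * (μ x - μfs) / rf j x
        = νf * (μ x - μfs) * ∑ j, 1 / rf j x := by
      rw [Finset.mul_sum]
      exact Finset.sum_congr rfl fun j _ => by rw [mul_one_div]
    have hzero : -(α ^ 2 / vol) *
          (16 * Real.pi * νb * (μ x - μbs) * (Nb : ℝ)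
            + 2 * ε * Real.pi * νf * (μ x - μfs) * ∑ j, 1 / rf j x)
          + c * (4 * Real.pi * ∑ i : Fin Nb, 2 * Rf i x * (2 * νb * (μ x - μbs) / Rf i x)
            + 2 * Real.pi * ε * ∑ j : Fin Nf, νf * (μ x - μfs) / rf j x) = 0 := by
      rw [hSR, hSr, hc]; ring
    rw [hzero] at hD
    exact hD
  -- constancy on the admissible set
  have main : ∀ a b : ℝ, 0 ≤ a → ENNReal.ofReal a < T → 0 ≤ b → ENNReal.ofReal b < T →
      a ≤ b → E b = E a := by
    intro a b ha haT hb hbT hab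
    have hmem : ∀ x ∈ Set.Icc a b, 0 ≤ x ∧ ENNReal.ofReal x < T := by
      intro x hx
      exact ⟨le_trans ha hx.1, lt_of_le_of_lt (ENNReal.ofReal_le_ofReal hx.2) hbT⟩
    have hcont : ContinuousOn E (Set.Icc a b) := fun x hx =>
      ((key x (hmem x hx).1 (hmem x hx).2).continuousAt).continuousWithinAt
    have := constant_of_has_deriv_right_zero hcont
      (fun x hx => (key x (hmem x (Set.Ico_subset_Icc_self hx)).1
        (hmem x (Set.Ico_subset_Icc_self hx)).2).hasDerivWithinAt)
    exact this b ⟨hab, le_rfl⟩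
  intro τ₁ τ₂ h1 h1T h2 h2T
  rcases le_total τ₁ τ₂ with h | h
  · exact (main τ₁ τ₂ h1 h1T h2 h2T h).symm
  · exact main τ₂ τ₁ h2 h2T h1 h1T h
end
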